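/- Let R > 0 and let f be holomorphic on the open disc D(0,R) ⊆ ℂ, with Taylor coefficients c_j := f^{(j)}(0)/j! at 0. Suppose there exists an integer k ≥ 1 such that A_{s,k}(c) = 0 for every s ≥ 0. Then there exist polynomials P, Q ∈ ℂ[z] with Q ≠ 0, deg Q ≤ k, and (P = 0 or deg P ≤ k − 1), such that Q(z)·f(z) = P(z) for every z ∈ D(0,R); in particular f is (the restriction of) a rational function. -/

import Mathlib

/-- The Hankel matrix `H_{s,m}(c)`: the `(m+1) × (m+1)` complex matrix whose `(i,j)` entry
is `c (s + i + j)`. Its determinant is `A_{s,m}(c)`. -/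
noncomputable def hankelDet (c : ℕ → ℂ) (s m : ℕ) : ℂ :=
  (Matrix.of fun i j : Fin (m + 1) => c (s + (i : ℕ) + (j : ℕ))).det

open Matrix Finset

lemma kernel_parallel {n : ℕ} (M : Matrix (Fin (n+2)) (Fin (n+2)) ℂ)
    (hN : (M.submatrix Fin.succ Fin.castSucc).det ≠ 0)
    (x y : Fin (n+2) → ℂ) (hx : M.mulVec x = 0) (hy : M.mulVec y = 0) :
    x 0 * y (Fin.last _) = x (Fin.last _) * y 0 := by
  set N := M.submatrix Fin.succ Fin.castSucc with hNdef
  have hU : IsUnit N.det := isUnit_iff_ne_zero.mpr hN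
  set u : Fin (n+1) → ℂ := fun i => - M i.succ (Fin.last _) with hu
  have key : ∀ w : Fin (n+2) → ℂ, M.mulVec w = 0 →
      ∀ i : Fin (n+1), w i.castSucc = w (Fin.last _) * (N⁻¹.mulVec u) i := by
    intro w hw i
    have h1 : N.mulVec (fun j => w j.castSucc) = fun i => w (Fin.last _) * u i := by
      funext i
      have h0 := congrFun hw i.succ
      simp only [Matrix.mulVec, dotProduct, Pi.zero_apply] at h0
      rw [Fin.sum_univ_castSucc] at h0
      simp only [Matrix.mulVec, dotProduct, hNdef, Matrix.submatrix_apply, hu]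
      ring_nf
      linear_combination h0
    have h2 : (fun j => w j.castSucc) = N⁻¹.mulVec (fun i => w (Fin.last _) * u i) := by
      rw [← h1, Matrix.mulVec_mulVec, Matrix.nonsing_inv_mul _ hU, Matrix.one_mulVec]
    have h3 := congrFun h2 i
    simp only [Matrix.mulVec, dotProduct] at h3 ⊢
    rw [h3]
    rw [Finset.mul_sum]
    exact Finset.sum_congr rfl fun j _ => by ring
  have hx0 := key x hx 0
  have hy0 := key y hy 0
  have e0 : (0 : Fin (n+1)).castSucc = (0 : Fin (n+2)) := rfl
  rw [e0] at hx0 hy0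
  rw [hx0, hy0]; ring

lemma zero_prop (c : ℕ → ℂ) (m s : ℕ) (hH : hankelDet c s (m+1) = 0)
    (ha : hankelDet c s m = 0) : hankelDet c (s+1) m = 0 := by
  by_contra h1
  set M : Matrix (Fin (m+2)) (Fin (m+2)) ℂ :=
    Matrix.of (fun i j : Fin (m+2) => c (s + (i:ℕ) + (j:ℕ))) with hM
  have hdetM : M.det = 0 := hH
  -- identify corner minors
  have eSC : (M.submatrix Fin.succ Fin.castSucc).det = hankelDet c (s+1) m := by
    unfold hankelDet; congr 1; ext i j
    simp only [Matrix.submatrix_apply, hM, Matrix.of_apply, Fin.val_succ, Fin.coe_castSucc]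
    congr 1; omega
  have eCS : (M.submatrix Fin.castSucc Fin.succ).det = hankelDet c (s+1) m := by
    unfold hankelDet; congr 1; ext i j
    simp only [Matrix.submatrix_apply, hM, Matrix.of_apply, Fin.val_succ, Fin.coe_castSucc]
    congr 1; omega
  have eCC : (M.submatrix Fin.castSucc Fin.castSucc).det = hankelDet c s m := by
    unfold hankelDet; congr 1
  have eSS : (M.submatrix Fin.succ Fin.succ).det = hankelDet c (s+2) m := by
    unfold hankelDet; congr 1; ext i j
    simp only [Matrix.submatrix_apply, hM, Matrix.of_apply, Fin.val_succ]
    congr 1; omega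
  set x : Fin (m+2) → ℂ := fun l => M.adjugate l 0 with hxdef
  set y : Fin (m+2) → ℂ := fun l => M.adjugate l (Fin.last _) with hydef
  have hx : M.mulVec x = 0 := by
    funext i
    have := congrFun (congrFun (Matrix.mul_adjugate M) i) 0
    simp only [Matrix.mul_apply, hdetM, Matrix.smul_apply, zero_smul] at this
    simpa [Matrix.mulVec, dotProduct, hxdef] using this
  have hy : M.mulVec y = 0 := by
    funext i
    have := congrFun (congrFun (Matrix.mul_adjugate M) i) (Fin.last _)
    simp only [Matrix.mul_apply, hdetM, Matrix.smul_apply, zero_smul] at this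
    simpa [Matrix.mulVec, dotProduct, hydef] using this
  have hpar := kernel_parallel M (by rw [eSC]; exact h1) x y hx hy
  have ex0 : x 0 = hankelDet c (s+2) m := by
    show M.adjugate 0 0 = _
    rw [Matrix.adjugate_fin_succ_eq_det_submatrix, Fin.succAbove_zero]
    simp [eSS]
  have exl : x (Fin.last _) = (-1:ℂ)^(m+1) * hankelDet c (s+1) m := by
    show M.adjugate (Fin.last _) 0 = _
    rw [Matrix.adjugate_fin_succ_eq_det_submatrix, Fin.succAbove_zero, Fin.succAbove_last]
    simp [eSC]
  have ey0 : y 0 = (-1:ℂ)^(m+1) * hankelDet c (s+1) m := by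
    show M.adjugate 0 (Fin.last _) = _
    rw [Matrix.adjugate_fin_succ_eq_det_submatrix, Fin.succAbove_zero, Fin.succAbove_last]
    simp [eCS]
  have eyl : y (Fin.last _) = hankelDet c s m := by
    show M.adjugate (Fin.last _) (Fin.last _) = _
    rw [Matrix.adjugate_fin_succ_eq_det_submatrix, Fin.succAbove_last]
    simp [eCC]
  rw [ex0, exl, ey0, eyl, ha, mul_zero] at hpar
  have : hankelDet c (s+1) m * hankelDet c (s+1) m = 0 := by
    have h2 : ((-1:ℂ)^(m+1)) * ((-1:ℂ)^(m+1)) = 1 := by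
      rw [← pow_add]
      exact Even.neg_one_pow ⟨m+1, rfl⟩
    calc hankelDet c (s+1) m * hankelDet c (s+1) m
        = (((-1:ℂ)^(m+1)) * ((-1:ℂ)^(m+1))) * (hankelDet c (s+1) m * hankelDet c (s+1) m) := by
          rw [h2, one_mul]
      _ = ((-1:ℂ)^(m+1) * hankelDet c (s+1) m) * ((-1:ℂ)^(m+1) * hankelDet c (s+1) m) := by ring
      _ = 0 := hpar.symm
  exact h1 (by
    rcases mul_eq_zero.mp this with h|h <;> exact h)

lemma exists_q0 (c : ℕ → ℂ) (k : ℕ) :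
    ∃ q : Fin (k+2) → ℂ, q ≠ 0 ∧ ∀ i : ℕ, i ≤ k → ∑ j : Fin (k+2), q j * c (i + j) = 0 := by
  classical
  set B : Matrix (Fin (k+2)) (Fin (k+2)) ℂ :=
    Matrix.of (fun i j : Fin (k+2) => if (i:ℕ) ≤ k then c (i + j) else 0) with hB
  have hdet : B.det = 0 := by
    apply Matrix.det_eq_zero_of_row_eq_zero (Fin.last _)
    intro j
    simp [hB, Fin.val_last]
  obtain ⟨v, hv0, hv⟩ := (Matrix.exists_mulVec_eq_zero_iff).mpr hdet
  refine ⟨v, hv0, ?_⟩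
  intro i hi
  have := congrFun hv ⟨i, by omega⟩
  simp only [Matrix.mulVec, dotProduct, Pi.zero_apply, hB, Matrix.of_apply] at this
  rw [← this]
  apply Finset.sum_congr rfl
  intro j _
  simp only [hi, if_true]
  ring

lemma span_step (c : ℕ → ℂ) (k : ℕ) (q : Fin (k+2) → ℂ) (s : ℕ)
    (hdet : hankelDet c s (k+1) = 0) (ha : hankelDet c s k ≠ 0)
    (hb : ∀ i : ℕ, i ≤ k → ∑ j : Fin (k+2), q j * c (s + i + j) = 0) :
    ∑ j : Fin (k+2), q j * c (s + (k+1) + j) = 0 := by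
  classical
  set H : Matrix (Fin (k+2)) (Fin (k+2)) ℂ :=
    Matrix.of (fun i j : Fin (k+2) => c (s + (i:ℕ) + (j:ℕ))) with hHdef
  obtain ⟨w, hw0, hw⟩ := (Matrix.exists_vecMul_eq_zero_iff).mpr (show H.det = 0 from hdet)
  -- w last ≠ 0
  have hwlast : w (Fin.last _) ≠ 0 := by
    intro hwl
    set A : Matrix (Fin (k+1)) (Fin (k+1)) ℂ :=
      Matrix.of (fun i j : Fin (k+1) => c (s + (i:ℕ) + (j:ℕ))) with hAdef
    have hAU : IsUnit A.det := isUnit_iff_ne_zero.mpr ha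
    have hA : (fun i : Fin (k+1) => w i.castSucc) ᵥ* A = 0 := by
      funext j
      have h0 := congrFun hw j.castSucc
      simp only [Matrix.vecMul, dotProduct, Pi.zero_apply, hHdef, Matrix.of_apply] at h0
      rw [Fin.sum_univ_castSucc, hwl, zero_mul, add_zero] at h0
      simpa [Matrix.vecMul, dotProduct, hAdef] using h0
    have hA2 : (fun i : Fin (k+1) => w i.castSucc) = 0 := by
      have := congrArg (fun v => v ᵥ* A⁻¹) hA
      simpa [Matrix.vecMul_vecMul, Matrix.mul_nonsing_inv _ hAU] using this
    apply hw0
    funext i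
    induction i using Fin.lastCases with
    | last => exact hwl
    | cast i => exact congrFun hA2 i
  -- combine
  have hcomb : ∑ i : Fin (k+2), w i * (∑ j : Fin (k+2), q j * c (s + (i:ℕ) + j)) = 0 := by
    have : ∀ j : Fin (k+2), ∑ i : Fin (k+2), w i * c (s + (i:ℕ) + (j:ℕ)) = 0 := by
      intro j
      have := congrFun hw j
      simpa [Matrix.vecMul, dotProduct, hHdef] using this
    calc ∑ i : Fin (k+2), w i * (∑ j : Fin (k+2), q j * c (s + (i:ℕ) + j))
        = ∑ j : Fin (k+2), q j * (∑ i : Fin (k+2), w i * c (s + (i:ℕ) + j)) := by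
          simp_rw [Finset.mul_sum]
          rw [Finset.sum_comm]
          apply Finset.sum_congr rfl; intros; apply Finset.sum_congr rfl; intros; ring
      _ = 0 := by simp [this]
  rw [Fin.sum_univ_castSucc] at hcomb
  have hzero : ∀ i : Fin (k+1),
      w i.castSucc * (∑ j : Fin (k+2), q j * c (s + (i.castSucc:ℕ) + j)) = 0 := by
    intro i
    rw [show ((i.castSucc : Fin (k+2)):ℕ) = (i:ℕ) from rfl, hb i (by omega), mul_zero]
  rw [Finset.sum_eq_zero (fun i _ => hzero i), zero_add, Fin.val_last] at hcomb
  rcases mul_eq_zero.mp hcomb with h | h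
  · exact absurd h hwlast
  · exact h

lemma key : ∀ (k : ℕ) (c : ℕ → ℂ), (∀ s, hankelDet c s k = 0) →
    ∃ q : Fin (k+1) → ℂ, q ≠ 0 ∧ ∀ n : ℕ, ∑ i : Fin (k+1), q i * c (n + i) = 0 := by
  intro k
  induction k with
  | zero =>
    intro c h
    refine ⟨fun _ => 1, ?_, ?_⟩
    · intro h0; simpa using congrFun h0 0
    · intro n
      have := h n
      simp only [hankelDet, Matrix.det_fin_one, Matrix.of_apply] at this
      simpa using this
  | succ k IH =>
    intro c h
    classical
    obtain ⟨q, hq0, hqbase⟩ := exists_q0 c k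
    by_cases hZ : ∃ s, hankelDet c s k = 0
    · -- there is a vanishing minor: tail argument
      set m := Nat.find hZ with hm
      have ham : ∀ d, hankelDet c (m + d) k = 0 := by
        intro d
        induction d with
        | zero => simpa using Nat.find_spec hZ
        | succ d ihd =>
          exact zero_prop c k (m + d) (h (m+d)) ihd
      have hlt : ∀ s, s < m → hankelDet c s k ≠ 0 := fun s hs => Nat.find_min hZ hs
      have h' : ∀ s, hankelDet (fun n => c (m + n)) s k = 0 := by
        intro s
        have e : hankelDet (fun n => c (m+n)) s k = hankelDet c (m+s) k := by
          unfold hankelDet; congr 1; ext i j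
          simp only [Matrix.of_apply]; congr 1; omega
        rw [e]; exact ham s
      obtain ⟨q', hq'0, hq'⟩ := IH _ h'
      have hrec : ∀ N, m ≤ N → ∑ i : Fin (k+1), q' i * c (N + i) = 0 := by
        intro N hN
        have h2 := hq' (N - m)
        have e : ∀ i : Fin (k+1), m + (N - m + (i:ℕ)) = N + i := fun i => by omega
        simpa only [e] using h2
      have hexists : ∃ i, q' i ≠ 0 := by
        by_contra hc; push_neg at hc; exact hq'0 (funext fun i => hc i)
      set S := Finset.univ.filter (fun i => q' i ≠ 0) with hS
      have hSne : S.Nonempty := ⟨hexists.choose, by simp [hS, hexists.choose_spec]⟩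
      set ρ := S.max' hSne with hρ
      have hρ0 : q' ρ ≠ 0 := by have := S.max'_mem hSne; simpa [hS] using this
      have hρtop : ∀ i, ρ < i → q' i = 0 := by
        intro i hi
        by_contra hne
        have : i ∈ S := by simp [hS, hne]
        exact absurd (S.le_max' i this) (not_le.mpr hi)
      refine ⟨q, hq0, ?_⟩
      intro n
      induction n using Nat.strong_induction_on with
      | _ n ih =>
        rcases le_or_gt n k with h1 | h1
        · exact hqbase n h1
        rcases lt_or_ge (n - (k+1)) m with h2 | h2
        · have hs : n - (k+1) + (k+1) = n := by omega
          have h3 := span_step c k q (n-(k+1)) (h _) (hlt _ h2)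
            (fun i hi => ih (n-(k+1)+i) (by omega))
          rw [hs] at h3; exact h3
        · have hρlt : (ρ:ℕ) < k + 1 := ρ.isLt
          have hNρ : (ρ:ℕ) ≤ n := by omega
          set N := n - (ρ:ℕ) with hN
          have hNm : m ≤ N := by omega
          have hcomb : ∑ i : Fin (k+1), q' i * (∑ j : Fin (k+2), q j * c (N + i + j)) = 0 := by
            calc ∑ i : Fin (k+1), q' i * (∑ j : Fin (k+2), q j * c (N + i + j))
                = ∑ j : Fin (k+2), q j * (∑ i : Fin (k+1), q' i * c ((N + (j:ℕ)) + i)) := by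
                  simp_rw [Finset.mul_sum]; rw [Finset.sum_comm]
                  apply Finset.sum_congr rfl; intro j _
                  apply Finset.sum_congr rfl; intro i _
                  have e : N + (i:ℕ) + (j:ℕ) = N + (j:ℕ) + (i:ℕ) := by omega
                  rw [e]; ring
              _ = 0 := by
                  apply Finset.sum_eq_zero; intro j _
                  rw [hrec (N + j) (by omega), mul_zero]
          have hsingle : ∑ i : Fin (k+1), q' i * (∑ j : Fin (k+2), q j * c (N + i + j))
              = q' ρ * (∑ j : Fin (k+2), q j * c (n + j)) := by
            rw [Finset.sum_eq_single ρ]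
            · have e : N + (ρ:ℕ) = n := by omega
              rw [e]
            · intro i _ hne
              rcases lt_trichotomy (i:ℕ) (ρ:ℕ) with hlt' | heq | hgt
              · rw [ih (N + i) (by omega), mul_zero]
              · exact absurd (Fin.ext heq) hne
              · rw [hρtop i hgt, zero_mul]
            · intro hmem; exact absurd (Finset.mem_univ ρ) hmem
          rw [hsingle] at hcomb
          rcases mul_eq_zero.mp hcomb with hbad | hgood
          · exact absurd hbad hρ0
          · exact hgood
    · push_neg at hZ
      refine ⟨q, hq0, ?_⟩
      intro n
      induction n using Nat.strong_induction_on with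
      | _ n ih =>
        rcases le_or_gt n k with h1 | h1
        · exact hqbase n h1
        · have hs : n - (k+1) + (k+1) = n := by omega
          have h3 := span_step c k q (n-(k+1)) (h _) (hZ _)
            (fun i hi => ih (n-(k+1)+i) (by omega))
          rw [hs] at h3; exact h3

/-- Kronecker's criterion: let `f` be holomorphic on the disc `D(0,R)` with Taylor
coefficients `c j = f^{(j)}(0)/j!`. If all Hankel determinants `A_{s,k}(c)` vanish for
some `k ≥ 1`, then there are polynomials `P, Q` with `Q ≠ 0`, `deg Q ≤ k`,
`deg P ≤ k − 1` (or `P = 0`) and `Q(z)·f(z) = P(z)` on `D(0,R)`;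
in particular `f` is rational. -/
theorem kronecker_rationality (R : ℝ) (hR : 0 < R) (f : ℂ → ℂ)
    (hf : DifferentiableOn ℂ f (Metric.ball 0 R)) (k : ℕ) (hk : 1 ≤ k)
    (h : ∀ s : ℕ,
      hankelDet (fun j => iteratedDeriv j f 0 / (Nat.factorial j : ℂ)) s k = 0) :
    ∃ P Q : Polynomial ℂ, Q ≠ 0 ∧ Q.natDegree ≤ k ∧ (P = 0 ∨ P.natDegree ≤ k - 1) ∧
      ∀ z ∈ Metric.ball (0 : ℂ) R, Q.eval z * f z = P.eval z := by
  classical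
  set c : ℕ → ℂ := fun j => iteratedDeriv j f 0 / (Nat.factorial j : ℂ) with hc
  obtain ⟨q, hq0, hrec⟩ := key k c h
  set Q : Polynomial ℂ := ∑ i : Fin (k+1), Polynomial.C (q i) * Polynomial.X ^ (k - (i:ℕ))
    with hQ
  set g : ℕ → ℂ :=
    fun M => ∑ i : Fin (k+1), if k - (i:ℕ) ≤ M then q i * c (M - (k - (i:ℕ))) else 0 with hg
  set P : Polynomial ℂ := ∑ M ∈ Finset.range k, Polynomial.C (g M) * Polynomial.X ^ M with hP
  have hexq : ∃ i, q i ≠ 0 := by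
    by_contra hcon; push_neg at hcon; exact hq0 (funext fun i => hcon i)
  obtain ⟨i0, hi0⟩ := hexq
  refine ⟨P, Q, ?_, ?_, ?_, ?_⟩
  · -- Q ≠ 0
    intro hQz
    have hco : Q.coeff (k - (i0:ℕ)) = q i0 := by
      rw [hQ, Polynomial.finset_sum_coeff]
      rw [Finset.sum_eq_single i0]
      · rw [Polynomial.coeff_C_mul_X_pow]; simp
      · intro i _ hne
        rw [Polynomial.coeff_C_mul_X_pow]
        have hik : (i:ℕ) < k + 1 := i.isLt
        have hik0 : (i0:ℕ) < k + 1 := i0.isLt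
        have : ¬ (k - (i0:ℕ) = k - (i:ℕ)) := by
          intro e; exact hne (Fin.ext (by omega))
        simp [this]
      · intro hmem; exact absurd (Finset.mem_univ i0) hmem
    rw [hQz, Polynomial.coeff_zero] at hco
    exact hi0 hco.symm
  · -- natDegree Q ≤ k
    rw [hQ]
    apply Polynomial.natDegree_sum_le_of_forall_le
    intro i _
    exact le_trans (Polynomial.natDegree_C_mul_X_pow_le _ _) (Nat.sub_le _ _)
  · -- P deg
    right
    rw [hP]
    apply Polynomial.natDegree_sum_le_of_forall_le
    intro M hM
    have : M < k := Finset.mem_range.mp hM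
    exact le_trans (Polynomial.natDegree_C_mul_X_pow_le _ _) (by omega)
  · intro z hz
    have hsum : HasSum (fun n : ℕ => c n * z ^ n) (f z) := by
      have H := Complex.hasSum_taylorSeries_on_ball hf hz
      have e : (fun n : ℕ => c n * z ^ n)
          = fun n : ℕ => (Nat.factorial n : ℂ)⁻¹ • (z - 0) ^ n • iteratedDeriv n f 0 := by
        funext n
        simp only [hc, smul_eq_mul, sub_zero]
        field_simp
      rw [e]; exact H
    have hterm : ∀ i : Fin (k+1),
        HasSum (fun M : ℕ => (if k - (i:ℕ) ≤ M then q i * c (M - (k - (i:ℕ))) else 0) * z ^ M)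
          (q i * z ^ (k - (i:ℕ)) * f z) := by
      intro i
      set d := k - (i:ℕ) with hd
      set F : ℕ → ℂ := fun M => (if d ≤ M then q i * c (M - d) else 0) * z ^ M with hF
      have h1 : HasSum (fun n : ℕ => q i * z ^ d * (c n * z ^ n)) (q i * z ^ d * f z) :=
        hsum.mul_left _
      have h2 : (F ∘ fun n : ℕ => n + d) = fun n : ℕ => q i * z ^ d * (c n * z ^ n) := by
        funext n
        simp only [Function.comp_apply, hF]
        rw [if_pos (by omega : d ≤ n + d), Nat.add_sub_cancel, pow_add]
        ring
      have hvan : ∀ M ∉ Set.range (fun n : ℕ => n + d), F M = 0 := by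
        intro M hM
        have hnd : ¬ d ≤ M := by
          intro hdM; exact hM ⟨M - d, by simp; omega⟩
        simp [hF, hnd]
      have h3 : HasSum F (q i * z ^ d * f z) :=
        ((add_left_injective d).hasSum_iff hvan).mp (by rw [h2]; exact h1)
      exact h3
    have hQsum : HasSum (fun M : ℕ => g M * z ^ M)
        (∑ i : Fin (k+1), q i * z ^ (k - (i:ℕ)) * f z) := by
      have := hasSum_sum (fun i (_ : i ∈ Finset.univ) => hterm i)
      have e : (fun M : ℕ => ∑ i : Fin (k+1),
          (if k - (i:ℕ) ≤ M then q i * c (M - (k - (i:ℕ))) else 0) * z ^ M)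
          = fun M : ℕ => g M * z ^ M := by
        funext M
        rw [hg, Finset.sum_mul]
      rw [← e]; exact this
    have hfin : HasSum (fun M : ℕ => g M * z ^ M) (∑ M ∈ Finset.range k, g M * z ^ M) := by
      apply hasSum_sum_of_ne_finset_zero
      intro M hM
      have hkM : k ≤ M := by
        by_contra hcon; exact hM (Finset.mem_range.mpr (by omega))
      have hgM : g M = 0 := by
        rw [hg]
        have e : ∀ i : Fin (k+1),
            (if k - (i:ℕ) ≤ M then q i * c (M - (k - (i:ℕ))) else 0)
            = q i * c ((M - k) + (i:ℕ)) := by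
          intro i
          have hik : (i:ℕ) < k + 1 := i.isLt
          rw [if_pos (by omega)]
          have e2 : M - (k - (i:ℕ)) = (M - k) + (i:ℕ) := by omega
          rw [e2]
        simp only [e]
        exact hrec (M - k)
      rw [hgM, zero_mul]
    have hval : (∑ i : Fin (k+1), q i * z ^ (k - (i:ℕ)) * f z)
        = ∑ M ∈ Finset.range k, g M * z ^ M := HasSum.unique hQsum hfin
    have hQev : Q.eval z = ∑ i : Fin (k+1), q i * z ^ (k - (i:ℕ)) := by
      rw [hQ, Polynomial.eval_finset_sum]
      apply Finset.sum_congr rfl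
      intro i _
      simp
    have hPev : P.eval z = ∑ M ∈ Finset.range k, g M * z ^ M := by
      rw [hP, Polynomial.eval_finset_sum]
      apply Finset.sum_congr rfl
      intro M _
      simp
    rw [hQev, hPev, ← hval, Finset.sum_mul]
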